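/- Fix δ ∈ (0,1/4) and set L = ⌊1/(2δ)⌋ + 1. There exists ρ' = ρ'(δ) > 0 such that for every λ ∈ (δ, 1/2−δ), every m ∈ ℕ, and every level-m cylinder C of the Bernoulli convolution μ_λ: if Q ⊆ C is a union of at most L intervals with total Lebesgue measure less than ρ'·|C| = ρ'·λ^m·2/(1−λ)·(1/2), then μ_λ(Q) ≤ (1/2)·μ_λ(C). -/

import Mathlib

open MeasureTheory Filter Set

noncomputable section

/-- The sign associated to a boolean: `true ↦ 1`, `false ↦ -1`. -/
def sgn (b : Bool) : ℝ := if b then 1 else -1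

/-- `ν` is the (1/2,1/2) i.i.d. Bernoulli measure on `{-1,1}^ℕ` (coded by booleans). -/
def IsBernoulliMeasure (ν : Measure (ℕ → Bool)) : Prop :=
  IsProbabilityMeasure ν ∧
    ∀ (s : Finset ℕ) (b : ℕ → Bool), ν {a | ∀ i ∈ s, a i = b i} = (1 / 2 : ENNReal) ^ s.card

/-- The random series `X(λ; a) = Σ_{m≥1} a_m λ^{m-1}` (zero-indexed). -/
def X (lam : ℝ) (a : ℕ → Bool) : ℝ := ∑' n : ℕ, sgn (a n) * lam ^ n

/-- The Bernoulli convolution `μ_λ`, the law of `X(λ; ·)`. -/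
def bc (ν : Measure (ℕ → Bool)) (lam : ℝ) : Measure ℝ := ν.map (X lam)

/-- Fourier transform `μ̂(ξ) = ∫ e^{iξx} dμ(x)` of a measure on `ℝ`. -/
def FT (μ : Measure ℝ) (ξ : ℝ) : ℂ := ∫ x, Complex.exp (ξ * x * Complex.I) ∂μ

/-- The maps `f₁(x) = λx - 1`, `f₂(x) = λx + 1` of the generating IFS. -/
def ifsMap (lam : ℝ) (b : Bool) (x : ℝ) : ℝ := lam * x + sgn b

/-- The interval `K_λ = [-1/(1-λ), 1/(1-λ)]`. -/
def K (lam : ℝ) : Set ℝ := Icc (-(1 / (1 - lam))) (1 / (1 - lam))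

/-- The level-`m` cylinder `C_w = f_{w₁} ∘ ⋯ ∘ f_{w_m} (K_λ)` for a word `w` of length `m`. -/
def cylinder (lam : ℝ) : List Bool → Set ℝ
  | [] => K lam
  | b :: w => ifsMap lam b '' cylinder lam w

open scoped ENNReal

lemma abs_sgn (b : Bool) : |sgn b| = 1 := by cases b <;> simp [sgn]

lemma summable_X (lam : ℝ) (h0 : 0 ≤ lam) (h1 : lam < 1) (a : ℕ → Bool) :
    Summable (fun n => sgn (a n) * lam ^ n) := by
  apply Summable.of_norm_bounded (summable_geometric_of_lt_one h0 h1)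
  intro n
  rw [Real.norm_eq_abs, abs_mul, abs_sgn, one_mul, abs_pow, abs_of_nonneg h0]

lemma X_mem_K (lam : ℝ) (h0 : 0 ≤ lam) (h1 : lam < 1) (a : ℕ → Bool) :
    X lam a ∈ K lam := by
  have hsum := summable_X lam h0 h1 a
  have heq : ∀ n : ℕ, ‖sgn (a n) * lam ^ n‖ = lam ^ n := by
    intro n
    rw [Real.norm_eq_abs, abs_mul, abs_sgn, one_mul, abs_pow, abs_of_nonneg h0]
  have hsumn : Summable fun n : ℕ => ‖sgn (a n) * lam ^ n‖ := by
    simp only [heq]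
    exact summable_geometric_of_lt_one h0 h1
  have habs : |X lam a| ≤ 1 / (1 - lam) := by
    rw [X, ← Real.norm_eq_abs]
    refine (norm_tsum_le_tsum_norm hsumn).trans ?_
    rw [tsum_congr heq, tsum_geometric_of_lt_one h0 h1, one_div]
  have h := abs_le.mp habs
  exact ⟨h.1, h.2⟩

lemma X_succ (lam : ℝ) (h0 : 0 ≤ lam) (h1 : lam < 1) (a : ℕ → Bool) :
    X lam a = ifsMap lam (a 0) (X lam (fun n => a (n + 1))) := by
  have hsum := summable_X lam h0 h1 a
  rw [X, hsum.tsum_eq_zero_add]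
  have : ∑' n : ℕ, sgn (a (n + 1)) * lam ^ (n + 1)
      = lam * ∑' n : ℕ, sgn (a (n + 1)) * lam ^ n := by
    rw [← tsum_mul_left]
    congr 1; funext n; ring
  simp only [pow_zero, mul_one, this, ifsMap, X]
  ring

lemma X_mem_cylinder (lam : ℝ) (h0 : 0 ≤ lam) (h1 : lam < 1) (a : ℕ → Bool) (n : ℕ) :
    X lam a ∈ _root_.cylinder lam (List.ofFn fun i : Fin n => a i) := by
  induction n generalizing a with
  | zero => simpa [_root_.cylinder] using X_mem_K lam h0 h1 a
  | succ n ih =>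
    rw [List.ofFn_succ]
    exact ⟨X lam (fun k => a (k + 1)), by simpa using ih (fun k => a (k + 1)),
      (X_succ lam h0 h1 a).symm⟩

lemma cylinder_subset_K (lam : ℝ) (h0 : 0 ≤ lam) (h1 : lam < 1) (w : List Bool) :
    _root_.cylinder lam w ⊆ K lam := by
  induction w with
  | nil => exact subset_rfl
  | cons b w ih =>
    rintro _ ⟨x, hx, rfl⟩
    have hx' := ih hx
    have hpos : (0:ℝ) < 1 - lam := by linarith
    have h2 : |x| ≤ 1 / (1 - lam) := abs_le.mpr ⟨hx'.1, hx'.2⟩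
    have : |ifsMap lam b x| ≤ 1 / (1 - lam) := by
      have : |ifsMap lam b x| ≤ lam * |x| + 1 := by
        calc |ifsMap lam b x| ≤ |lam * x| + |sgn b| := abs_add_le _ _
          _ = lam * |x| + 1 := by rw [abs_mul, abs_sgn, abs_of_nonneg h0]
      have h3 : lam * |x| + 1 ≤ lam * (1 / (1 - lam)) + 1 := by nlinarith
      have h4 : lam * (1 / (1 - lam)) + 1 = 1 / (1 - lam) := by field_simp; ring
      linarith
    exact abs_le.mp this

lemma measurable_X (lam : ℝ) (h0 : 0 ≤ lam) (h1 : lam < 1) : Measurable (X lam) := by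
  apply measurable_of_tendsto_metrizable
    (f := fun N a => ∑ n ∈ Finset.range N, sgn (a n) * lam ^ n)
  · intro N
    apply Finset.measurable_sum
    intro n _
    exact ((measurable_from_top (f := sgn)).comp (measurable_pi_apply n)).mul_const _
  · rw [tendsto_pi_nhds]
    intro a
    exact (summable_X lam h0 h1 a).hasSum.tendsto_sum_nat

/-- Separation of distinct cylinders of the same length. -/
lemma cylinder_sep (lam : ℝ) (h0 : 0 < lam) (h2 : lam < 1 / 2) :
    ∀ (w w' : List Bool), w.length = w'.length → w ≠ w' →
    ∀ x ∈ _root_.cylinder lam w, ∀ y ∈ _root_.cylinder lam w',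
      2 * (1 - 2 * lam) * lam ^ (w.length - 1) / (1 - lam) ≤ |x - y| := by
  have h1 : lam < 1 := by linarith
  have hpos : (0:ℝ) < 1 - lam := by linarith
  intro w
  induction w with
  | nil =>
    intro w' hl hne
    have : w' = [] := List.length_eq_zero_iff.mp (by simpa using hl.symm)
    exact absurd this.symm hne
  | cons b w ih =>
    rintro (_ | ⟨b', w'⟩) hl hne x hx y hy
    · simp at hl
    · simp only [List.length_cons, Nat.add_right_cancel_iff] at hl
      obtain ⟨xx, hxx, rfl⟩ := hx
      obtain ⟨yy, hyy, rfl⟩ := hy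
      by_cases hb : b = b'
      · subst hb
        have hwne : w ≠ w' := by rintro rfl; exact hne rfl
        have hwlen : w.length ≠ 0 := by
          intro h
          have hw0 : w = [] := List.length_eq_zero_iff.mp h
          have hw'0 : w' = [] := List.length_eq_zero_iff.mp (hl.symm.trans h)
          exact hwne (hw0.trans hw'0.symm)
        have := ih w' hl hwne xx hxx yy hyy
        have hd : |ifsMap lam b xx - ifsMap lam b yy| = lam * |xx - yy| := by
          simp only [ifsMap]
          rw [show lam * xx + sgn b - (lam * yy + sgn b) = lam * (xx - yy) by ring,
            abs_mul, abs_of_pos h0]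
        rw [hd]
        have hexp : (b :: w).length - 1 = (w.length - 1) + 1 := by
          simp only [List.length_cons]; omega
        rw [hexp, pow_succ]
        calc 2 * (1 - 2 * lam) * (lam ^ (w.length - 1) * lam) / (1 - lam)
            = lam * (2 * (1 - 2 * lam) * lam ^ (w.length - 1) / (1 - lam)) := by ring
          _ ≤ lam * |xx - yy| := by
              apply mul_le_mul_of_nonneg_left this (le_of_lt h0)
      · -- different first letters
        have hxK := cylinder_subset_K lam (le_of_lt h0) h1 w hxx
        have hyK := cylinder_subset_K lam (le_of_lt h0) h1 w' hyy
        have key : ∀ u v : ℝ, u ∈ K lam → v ∈ K lam →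
            2 * (1 - 2 * lam) / (1 - lam) ≤ ifsMap lam true u - ifsMap lam false v := by
          intro u v hu hv
          simp only [K, mem_Icc] at hu hv
          have heq : ifsMap lam true u - ifsMap lam false v = lam * (u - v) + 2 := by
            simp only [ifsMap, sgn, if_true, Bool.false_eq_true, if_false]
            ring
          rw [heq, div_le_iff₀ hpos]
          have e : (1 - lam) * (1 / (1 - lam)) = 1 := by field_simp
          nlinarith [hu.1, hv.2, mul_le_mul_of_nonneg_left (sub_nonneg.mpr hv.2) h0.le,
            mul_le_mul_of_nonneg_left (sub_nonneg.mpr hu.1) h0.le]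
        have hbase : 2 * (1 - 2 * lam) / (1 - lam) ≤ |ifsMap lam b xx - ifsMap lam b' yy| := by
          cases b
          · cases b'
            · exact absurd rfl hb
            · rw [abs_sub_comm]
              calc 2 * (1 - 2 * lam) / (1 - lam) ≤ ifsMap lam true yy - ifsMap lam false xx :=
                    key yy xx hyK hxK
                _ ≤ |ifsMap lam true yy - ifsMap lam false xx| := le_abs_self _
          · cases b'
            · calc 2 * (1 - 2 * lam) / (1 - lam) ≤ ifsMap lam true xx - ifsMap lam false yy :=
                    key xx yy hxK hyK
                _ ≤ |ifsMap lam true xx - ifsMap lam false yy| := le_abs_self _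
            · exact absurd rfl hb
        refine le_trans ?_ hbase
        have hpow : lam ^ ((b :: w).length - 1) ≤ 1 := pow_le_one₀ h0.le h1.le
        have h12 : (0:ℝ) ≤ 1 - 2 * lam := by linarith
        calc 2 * (1 - 2 * lam) * lam ^ ((b :: w).length - 1) / (1 - lam)
            ≤ 2 * (1 - 2 * lam) * 1 / (1 - lam) := by gcongr
          _ = 2 * (1 - 2 * lam) / (1 - lam) := by ring

/-- for `δ ∈ (0,1/4)` and `L = ⌊1/(2δ)⌋ + 1` there is `ρ' > 0` such that for
every `λ ∈ (δ, 1/2-δ)`, every level-`m` cylinder `C`, and every `Q ⊆ C` that is a union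
of at most `L` intervals of total Lebesgue measure less than `ρ'·λ^m/(1-λ)`,
one has `μ_λ(Q) ≤ (1/2)·μ_λ(C)`. -/
theorem measure_of_thin_subset_of_cylinder
    (ν : Measure (ℕ → Bool)) (hν : IsBernoulliMeasure ν)
    (δ : ℝ) (hδ : δ ∈ Ioo (0 : ℝ) (1 / 4)) :
    ∃ ρ' > (0 : ℝ), ∀ lam ∈ Ioo δ (1 / 2 - δ), ∀ (m : ℕ) (w : List Bool), w.length = m →
      ∀ Q : Set ℝ, Q ⊆ cylinder lam w →
      ∀ I : Fin (Nat.floor (1 / (2 * δ)) + 1) → Set ℝ,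
        (∀ j, (I j).OrdConnected) → Q = ⋃ j, I j →
        volume Q < ENNReal.ofReal (ρ' * lam ^ m / (1 - lam)) →
        bc ν lam Q ≤ (1 / 2) * bc ν lam (cylinder lam w) := by
  obtain ⟨hδ0, hδ4⟩ := hδ
  set L := Nat.floor (1 / (2 * δ)) + 1 with hLdef
  refine ⟨4 * δ ^ (L + 1), by positivity, ?_⟩
  intro lam hlam m w hw Q hQsub I hI hQeq hvol
  obtain ⟨hlo, hhi⟩ := hlam
  have h0 : (0:ℝ) < lam := lt_trans hδ0 hlo
  have h2 : lam < 1/2 := by linarith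
  have h1 : lam < 1 := by linarith
  have hpos : (0:ℝ) < 1 - lam := by linarith
  have hXm : Measurable (X lam) := measurable_X lam h0.le h1
  set n := m + L + 1 with hn
  -- Step 1: lower bound on cylinder measure
  have hcyl : (1/2 : ℝ≥0∞) ^ m ≤ bc ν lam (_root_.cylinder lam w) := by
    have hsub : {a : ℕ → Bool | ∀ i ∈ Finset.range m, a i = w.getD i true}
        ⊆ X lam ⁻¹' (_root_.cylinder lam w) := by
      intro a ha
      have hofn : (List.ofFn fun i : Fin m => a i) = w := by
        apply List.ext_getElem
        · simp [hw]
        · intro i h1i h2i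
          simp only [List.getElem_ofFn]
          have hi : i < m := by simpa [hw] using h2i
          rw [ha i (Finset.mem_range.mpr hi), List.getD_eq_getElem w true h2i]
      have := X_mem_cylinder lam h0.le h1 a m
      rw [hofn] at this
      exact this
    calc (1/2:ℝ≥0∞)^m = ν {a | ∀ i ∈ Finset.range m, a i = w.getD i true} := by
          rw [hν.2 (Finset.range m) _, Finset.card_range]
      _ ≤ ν (X lam ⁻¹' (_root_.cylinder lam w)) := measure_mono hsub
      _ ≤ bc ν lam (_root_.cylinder lam w) := Measure.le_map_apply hXm.aemeasurable _
  -- Step 2: each interval has small measure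
  have hIbound : ∀ j, bc ν lam (I j) ≤ (1/2 : ℝ≥0∞) ^ n := by
    intro j
    have hImeas : MeasurableSet (I j) := (hI j).measurableSet
    have hmap : bc ν lam (I j) = ν (X lam ⁻¹' (I j)) := Measure.map_apply hXm hImeas
    rcases Set.eq_empty_or_nonempty (X lam ⁻¹' (I j)) with he | ⟨a₀, ha₀⟩
    · rw [hmap, he, measure_empty]; exact zero_le
    · have hsub : X lam ⁻¹' (I j) ⊆ {a | ∀ i ∈ Finset.range n, a i = a₀ i} := by
        intro a ha
        simp only [Set.mem_setOf_eq]
        by_contra hc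
        push_neg at hc
        obtain ⟨i, hi, hia⟩ := hc
        have hi' : i < n := Finset.mem_range.mp hi
        have hlistne : (List.ofFn fun k : Fin n => a k) ≠ (List.ofFn fun k : Fin n => a₀ k) := by
          intro he
          exact hia (congrFun (List.ofFn_inj.mp he) ⟨i, hi'⟩)
        have hsep := cylinder_sep lam h0 h2 _ _ (by simp) hlistne
          (X lam a) (X_mem_cylinder lam h0.le h1 a n)
          (X lam a₀) (X_mem_cylinder lam h0.le h1 a₀ n)
        simp only [List.length_ofFn] at hsep
        -- numeric bound
        have e1 : δ ^ L ≤ lam ^ L := pow_le_pow_left₀ hδ0.le hlo.le L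
        have e2 : 4*δ ≤ 2*(1-2*lam) := by linarith
        have hnum : 4 * δ ^ (L+1) * lam ^ m / (1 - lam)
            ≤ 2*(1-2*lam)*lam^(n-1)/(1-lam) := by
          calc 4 * δ ^ (L+1) * lam ^ m / (1 - lam)
              = (4*δ) * δ^L * lam^m / (1-lam) := by ring
            _ ≤ (2*(1-2*lam)) * lam^L * lam^m / (1-lam) := by
                apply div_le_div_of_nonneg_right ?_ hpos.le
                apply mul_le_mul ?_ le_rfl (by positivity) (mul_nonneg (by linarith) (by positivity))
                apply mul_le_mul e2 e1 (by positivity) (by linarith)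
            _ = 2*(1-2*lam)*lam^(n-1)/(1-lam) := by
                rw [show n - 1 = L + m by omega, pow_add]; ring
        -- geometry
        have hIcc : uIcc (X lam a) (X lam a₀) ⊆ I j := (hI j).uIcc_subset ha ha₀
        have hvolI : ENNReal.ofReal |X lam a₀ - X lam a| ≤ volume (I j) := by
          rw [← Real.volume_interval]; exact measure_mono hIcc
        have hIQ : volume (I j) ≤ volume Q := by
          rw [hQeq]; exact measure_mono (subset_iUnion I j)
        have : ENNReal.ofReal (4 * δ ^ (L+1) * lam ^ m / (1 - lam))
            < ENNReal.ofReal (4 * δ ^ (L+1) * lam ^ m / (1 - lam)) := by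
          calc ENNReal.ofReal (4 * δ ^ (L+1) * lam ^ m / (1 - lam))
              ≤ ENNReal.ofReal |X lam a₀ - X lam a| := by
                apply ENNReal.ofReal_le_ofReal
                rw [abs_sub_comm]
                exact hnum.trans hsep
            _ ≤ volume (I j) := hvolI
            _ ≤ volume Q := hIQ
            _ < ENNReal.ofReal (4 * δ ^ (L+1) * lam ^ m / (1 - lam)) := hvol
        exact absurd this (lt_irrefl _)
      rw [hmap]
      calc ν (X lam ⁻¹' (I j)) ≤ ν {a | ∀ i ∈ Finset.range n, a i = a₀ i} :=
            measure_mono hsub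
        _ = (1/2:ℝ≥0∞)^n := by rw [hν.2 (Finset.range n) a₀, Finset.card_range]
  -- Step 3: sum up
  have htwo : (2:ℝ≥0∞) * (1/2) = 1 := by
    rw [one_div, ENNReal.mul_inv_cancel] <;> norm_num
  have hnum2 : (L:ℝ≥0∞) * (1/2)^n ≤ (1/2) * (1/2)^m := by
    have hL2 : (L:ℝ≥0∞) ≤ 2^L := by
      exact_mod_cast (Nat.lt_two_pow_self (n := L)).le
    calc (L:ℝ≥0∞) * (1/2)^n ≤ 2^L * (1/2)^n := by
          gcongr
      _ = (1/2) * (1/2)^m * ((2 * (1/2))^L) := by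
          rw [hn, mul_pow, pow_add, pow_add]; ring
      _ = (1/2) * (1/2)^m := by rw [htwo, one_pow, mul_one]
  calc bc ν lam Q = bc ν lam (⋃ j, I j) := by rw [hQeq]
    _ ≤ ∑ j, bc ν lam (I j) := measure_iUnion_fintype_le _ _
    _ ≤ ∑ _j : Fin L, (1/2:ℝ≥0∞)^n := Finset.sum_le_sum (fun j _ => hIbound j)
    _ = (L:ℝ≥0∞) * (1/2)^n := by
        rw [Finset.sum_const, Finset.card_univ, Fintype.card_fin, nsmul_eq_mul]
    _ ≤ (1/2) * (1/2)^m := hnum2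
    _ ≤ (1/2) * bc ν lam (_root_.cylinder lam w) := by gcongr

end
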